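/- If L > 1 and (1+k)^i / L > L for some i (i.e. i > 2·log L / log(1+k)), then the function ρ_i from the iterated stretching lemma is not the Jacobian (a.e., even up to a set of measure < ε_i) of any L-biLipschitz map f : [0,1]² → ℝ²; in particular, no L-biLipschitz map f : [0,1]² → ℝ² satisfies det(Df) = ρ_i almost everywhere. -/

import Mathlib

open MeasureTheory Set Metric

noncomputable section

abbrev E2 := EuclideanSpace ℝ (Fin 2)

def unitSq : Set E2 := {x : E2 | x 0 ∈ Icc (0:ℝ) 1 ∧ x 1 ∈ Icc (0:ℝ) 1}

def BiLipschitzOn (L : ℝ) (f : E2 → E2) (s : Set E2) : Prop :=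
  ∀ x ∈ s, ∀ y ∈ s, (1 / L) * dist x y ≤ dist (f x) (f y) ∧ dist (f x) (f y) ≤ L * dist x y

def Jac (f : E2 → E2) (s : Set E2) (x : E2) : ℝ := (fderivWithin ℝ f s x).det

theorem stmt_16 (L c k : ℝ) (i : ℕ) (hL : 1 < L) (hc : 0 < c) (hc1 : c < 1) (hk : 0 < k)
    (hgt : L < (1 + k) ^ i / L)
    (ρi : E2 → ℝ) (εi : ℝ) (n : ℕ) (l r : Fin n → E2) (hε : 0 < εi)
    (hseg : ∀ j, segment ℝ (l j) (r j) ⊆ unitSq)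
    (hnd : ∀ j, l j ≠ r j)
    (hstretch : ∀ f : E2 → E2, BiLipschitzOn L f unitSq →
      volume {z ∈ unitSq | Jac f unitSq z ≠ ρi z} < ENNReal.ofReal εi →
      ∃ j, ((1 + k) ^ i / L) * dist (l j) (r j) ≤ dist (f (l j)) (f (r j))) :
    (¬ ∃ f : E2 → E2, BiLipschitzOn L f unitSq ∧
        volume {z ∈ unitSq | Jac f unitSq z ≠ ρi z} < ENNReal.ofReal εi) ∧
    ¬ ∃ f : E2 → E2, BiLipschitzOn L f unitSq ∧
        ∀ᵐ x ∂(volume.restrict unitSq), Jac f unitSq x = ρi x := by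

  have hmeas : MeasurableSet unitSq := by
    have h0 : MeasurableSet {x : E2 | x 0 ∈ Icc (0:ℝ) 1} :=
      (measurable_pi_apply (0 : Fin 2)).comp (by fun_prop : Measurable (fun x : E2 => x.ofLp)) measurableSet_Icc
    have h1 : MeasurableSet {x : E2 | x 1 ∈ Icc (0:ℝ) 1} :=
      (measurable_pi_apply (1 : Fin 2)).comp (by fun_prop : Measurable (fun x : E2 => x.ofLp)) measurableSet_Icc
    exact h0.inter h1
  have key : ¬ ∃ f : E2 → E2, BiLipschitzOn L f unitSq ∧
      volume {z ∈ unitSq | Jac f unitSq z ≠ ρi z} < ENNReal.ofReal εi := by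
    rintro ⟨f, hf, hvol⟩
    obtain ⟨j, hj⟩ := hstretch f hf hvol
    have hl : l j ∈ unitSq := hseg j (left_mem_segment ℝ _ _)
    have hr : r j ∈ unitSq := hseg j (right_mem_segment ℝ _ _)
    have hub := (hf (l j) hl (r j) hr).2
    have hd : 0 < dist (l j) (r j) := dist_pos.mpr (hnd j)
    nlinarith [hj.trans hub]
  refine ⟨key, ?_⟩
  rintro ⟨f, hf, hae⟩
  refine key ⟨f, hf, ?_⟩
  have h0 : volume.restrict unitSq {x | Jac f unitSq x ≠ ρi x} = 0 := hae
  have : volume {z ∈ unitSq | Jac f unitSq z ≠ ρi z}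
      = volume.restrict unitSq {x | Jac f unitSq x ≠ ρi x} := by
    rw [Measure.restrict_apply' hmeas]
    congr 1
    ext x
    simp [and_comm]
  rw [this, h0]
  exact ENNReal.ofReal_pos.mpr hε
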